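/- The degree-2 H-bubble W solves the H-system on all of ℝ²: at every point (x,y) ∈ ℝ², ΔW(x,y) = 2 W_x(x,y) ∧ W_y(x,y). -/

import Mathlib

noncomputable section

/-- `ℝ³` with the Euclidean norm. -/
abbrev R3 : Type := EuclideanSpace ℝ (Fin 3)

/-- The vector in `ℝ³` with the given coordinates. -/
def e3 (a b c : ℝ) : R3 := (WithLp.equiv 2 (Fin 3 → ℝ)).symm ![a, b, c]

/-- The cross product on `ℝ³`. -/
def cross (a b : R3) : R3 :=
  e3 (a 1 * b 2 - a 2 * b 1) (a 2 * b 0 - a 0 * b 2) (a 0 * b 1 - a 1 * b 0)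

/-- Partial derivative in the `x` direction, identifying `ℝ²` with `ℂ` via `z = x + iy`. -/
def pdx (u : ℂ → R3) (z : ℂ) : R3 := fderiv ℝ u z 1

/-- Partial derivative in the `y` direction. -/
def pdy (u : ℂ → R3) (z : ℂ) : R3 := fderiv ℝ u z Complex.I

/-- Componentwise Laplacian. -/
def lap (u : ℂ → R3) (z : ℂ) : R3 := pdx (pdx u) z + pdy (pdy u) z

/-- `u` is a `C²` solution of the H-system `Δu = 2 uₓ ∧ u_y` on `Ω`. -/
def IsHSolution (u : ℂ → R3) (Ω : Set ℂ) : Prop :=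
  ContDiffOn ℝ 2 u Ω ∧ ∀ z ∈ Ω, lap u z = (2 : ℝ) • cross (pdx u z) (pdy u z)

/-- The degree-2 H-bubble `W = π(z²)`. -/
def W : ℂ → R3 := fun z =>
  e3 (2 * (z.re ^ 2 - z.im ^ 2) / ((z.re ^ 2 + z.im ^ 2) ^ 2 + 1))
    (4 * z.re * z.im / ((z.re ^ 2 + z.im ^ 2) ^ 2 + 1))
    (((z.re ^ 2 + z.im ^ 2) ^ 2 - 1) / ((z.re ^ 2 + z.im ^ 2) ^ 2 + 1))



open Complex in
private def f1 (z : ℂ) : ℝ := 2 * (z.re ^ 2 - z.im ^ 2) / ((z.re ^ 2 + z.im ^ 2) ^ 2 + 1)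
private def f2 (z : ℂ) : ℝ := 4 * z.re * z.im / ((z.re ^ 2 + z.im ^ 2) ^ 2 + 1)
private def f3 (z : ℂ) : ℝ := ((z.re ^ 2 + z.im ^ 2) ^ 2 - 1) / ((z.re ^ 2 + z.im ^ 2) ^ 2 + 1)

def f1x (z : ℂ) : ℝ := ((4 : ℝ) * z.re ^ 1 * z.im ^ 0 + (12 : ℝ) * z.re ^ 1 * z.im ^ 4 + (8 : ℝ) * z.re ^ 3 * z.im ^ 2 + (-4 : ℝ) * z.re ^ 5 * z.im ^ 0) / ((z.re ^ 2 + z.im ^ 2) ^ 2 + 1) ^ 2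
def f1y (z : ℂ) : ℝ := ((-4 : ℝ) * z.re ^ 0 * z.im ^ 1 + (4 : ℝ) * z.re ^ 0 * z.im ^ 5 + (-8 : ℝ) * z.re ^ 2 * z.im ^ 3 + (-12 : ℝ) * z.re ^ 4 * z.im ^ 1) / ((z.re ^ 2 + z.im ^ 2) ^ 2 + 1) ^ 2
def f2x (z : ℂ) : ℝ := ((4 : ℝ) * z.re ^ 0 * z.im ^ 1 + (4 : ℝ) * z.re ^ 0 * z.im ^ 5 + (-8 : ℝ) * z.re ^ 2 * z.im ^ 3 + (-12 : ℝ) * z.re ^ 4 * z.im ^ 1) / ((z.re ^ 2 + z.im ^ 2) ^ 2 + 1) ^ 2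
def f2y (z : ℂ) : ℝ := ((4 : ℝ) * z.re ^ 1 * z.im ^ 0 + (-12 : ℝ) * z.re ^ 1 * z.im ^ 4 + (-8 : ℝ) * z.re ^ 3 * z.im ^ 2 + (4 : ℝ) * z.re ^ 5 * z.im ^ 0) / ((z.re ^ 2 + z.im ^ 2) ^ 2 + 1) ^ 2
def f3x (z : ℂ) : ℝ := ((8 : ℝ) * z.re ^ 1 * z.im ^ 2 + (8 : ℝ) * z.re ^ 3 * z.im ^ 0) / ((z.re ^ 2 + z.im ^ 2) ^ 2 + 1) ^ 2
def f3y (z : ℂ) : ℝ := ((8 : ℝ) * z.re ^ 0 * z.im ^ 3 + (8 : ℝ) * z.re ^ 2 * z.im ^ 1) / ((z.re ^ 2 + z.im ^ 2) ^ 2 + 1) ^ 2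
def f1xx (z : ℂ) : ℝ := ((4 : ℝ) * z.re ^ 0 * z.im ^ 0 + (16 : ℝ) * z.re ^ 0 * z.im ^ 4 + (12 : ℝ) * z.re ^ 0 * z.im ^ 8 + (-48 : ℝ) * z.re ^ 2 * z.im ^ 6 + (-48 : ℝ) * z.re ^ 4 * z.im ^ 0 + (-120 : ℝ) * z.re ^ 4 * z.im ^ 4 + (-48 : ℝ) * z.re ^ 6 * z.im ^ 2 + (12 : ℝ) * z.re ^ 8 * z.im ^ 0) / ((z.re ^ 2 + z.im ^ 2) ^ 2 + 1) ^ 3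
def f1xy (z : ℂ) : ℝ := ((16 : ℝ) * z.re ^ 1 * z.im ^ 3 + (-48 : ℝ) * z.re ^ 1 * z.im ^ 7 + (-16 : ℝ) * z.re ^ 3 * z.im ^ 1 + (-48 : ℝ) * z.re ^ 3 * z.im ^ 5 + (48 : ℝ) * z.re ^ 5 * z.im ^ 3 + (48 : ℝ) * z.re ^ 7 * z.im ^ 1) / ((z.re ^ 2 + z.im ^ 2) ^ 2 + 1) ^ 3
def f1yx (z : ℂ) : ℝ := ((16 : ℝ) * z.re ^ 1 * z.im ^ 3 + (-48 : ℝ) * z.re ^ 1 * z.im ^ 7 + (-16 : ℝ) * z.re ^ 3 * z.im ^ 1 + (-48 : ℝ) * z.re ^ 3 * z.im ^ 5 + (48 : ℝ) * z.re ^ 5 * z.im ^ 3 + (48 : ℝ) * z.re ^ 7 * z.im ^ 1) / ((z.re ^ 2 + z.im ^ 2) ^ 2 + 1) ^ 3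
def f1yy (z : ℂ) : ℝ := ((-4 : ℝ) * z.re ^ 0 * z.im ^ 0 + (48 : ℝ) * z.re ^ 0 * z.im ^ 4 + (-12 : ℝ) * z.re ^ 0 * z.im ^ 8 + (48 : ℝ) * z.re ^ 2 * z.im ^ 6 + (-16 : ℝ) * z.re ^ 4 * z.im ^ 0 + (120 : ℝ) * z.re ^ 4 * z.im ^ 4 + (48 : ℝ) * z.re ^ 6 * z.im ^ 2 + (-12 : ℝ) * z.re ^ 8 * z.im ^ 0) / ((z.re ^ 2 + z.im ^ 2) ^ 2 + 1) ^ 3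
def f2xx (z : ℂ) : ℝ := ((-48 : ℝ) * z.re ^ 1 * z.im ^ 3 + (-48 : ℝ) * z.re ^ 1 * z.im ^ 7 + (-80 : ℝ) * z.re ^ 3 * z.im ^ 1 + (-48 : ℝ) * z.re ^ 3 * z.im ^ 5 + (48 : ℝ) * z.re ^ 5 * z.im ^ 3 + (48 : ℝ) * z.re ^ 7 * z.im ^ 1) / ((z.re ^ 2 + z.im ^ 2) ^ 2 + 1) ^ 3
def f2xy (z : ℂ) : ℝ := ((4 : ℝ) * z.re ^ 0 * z.im ^ 0 + (-8 : ℝ) * z.re ^ 0 * z.im ^ 4 + (-12 : ℝ) * z.re ^ 0 * z.im ^ 8 + (-48 : ℝ) * z.re ^ 2 * z.im ^ 2 + (48 : ℝ) * z.re ^ 2 * z.im ^ 6 + (-8 : ℝ) * z.re ^ 4 * z.im ^ 0 + (120 : ℝ) * z.re ^ 4 * z.im ^ 4 + (48 : ℝ) * z.re ^ 6 * z.im ^ 2 + (-12 : ℝ) * z.re ^ 8 * z.im ^ 0) / ((z.re ^ 2 + z.im ^ 2) ^ 2 + 1) ^ 3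
def f2yx (z : ℂ) : ℝ := ((4 : ℝ) * z.re ^ 0 * z.im ^ 0 + (-8 : ℝ) * z.re ^ 0 * z.im ^ 4 + (-12 : ℝ) * z.re ^ 0 * z.im ^ 8 + (-48 : ℝ) * z.re ^ 2 * z.im ^ 2 + (48 : ℝ) * z.re ^ 2 * z.im ^ 6 + (-8 : ℝ) * z.re ^ 4 * z.im ^ 0 + (120 : ℝ) * z.re ^ 4 * z.im ^ 4 + (48 : ℝ) * z.re ^ 6 * z.im ^ 2 + (-12 : ℝ) * z.re ^ 8 * z.im ^ 0) / ((z.re ^ 2 + z.im ^ 2) ^ 2 + 1) ^ 3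
def f2yy (z : ℂ) : ℝ := ((-80 : ℝ) * z.re ^ 1 * z.im ^ 3 + (48 : ℝ) * z.re ^ 1 * z.im ^ 7 + (-48 : ℝ) * z.re ^ 3 * z.im ^ 1 + (48 : ℝ) * z.re ^ 3 * z.im ^ 5 + (-48 : ℝ) * z.re ^ 5 * z.im ^ 3 + (-48 : ℝ) * z.re ^ 7 * z.im ^ 1) / ((z.re ^ 2 + z.im ^ 2) ^ 2 + 1) ^ 3
def f3xx (z : ℂ) : ℝ := ((8 : ℝ) * z.re ^ 0 * z.im ^ 2 + (8 : ℝ) * z.re ^ 0 * z.im ^ 6 + (24 : ℝ) * z.re ^ 2 * z.im ^ 0 + (-24 : ℝ) * z.re ^ 2 * z.im ^ 4 + (-72 : ℝ) * z.re ^ 4 * z.im ^ 2 + (-40 : ℝ) * z.re ^ 6 * z.im ^ 0) / ((z.re ^ 2 + z.im ^ 2) ^ 2 + 1) ^ 3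
def f3xy (z : ℂ) : ℝ := ((16 : ℝ) * z.re ^ 1 * z.im ^ 1 + (-48 : ℝ) * z.re ^ 1 * z.im ^ 5 + (-96 : ℝ) * z.re ^ 3 * z.im ^ 3 + (-48 : ℝ) * z.re ^ 5 * z.im ^ 1) / ((z.re ^ 2 + z.im ^ 2) ^ 2 + 1) ^ 3
def f3yx (z : ℂ) : ℝ := ((16 : ℝ) * z.re ^ 1 * z.im ^ 1 + (-48 : ℝ) * z.re ^ 1 * z.im ^ 5 + (-96 : ℝ) * z.re ^ 3 * z.im ^ 3 + (-48 : ℝ) * z.re ^ 5 * z.im ^ 1) / ((z.re ^ 2 + z.im ^ 2) ^ 2 + 1) ^ 3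
def f3yy (z : ℂ) : ℝ := ((24 : ℝ) * z.re ^ 0 * z.im ^ 2 + (-40 : ℝ) * z.re ^ 0 * z.im ^ 6 + (8 : ℝ) * z.re ^ 2 * z.im ^ 0 + (-72 : ℝ) * z.re ^ 2 * z.im ^ 4 + (-24 : ℝ) * z.re ^ 4 * z.im ^ 2 + (8 : ℝ) * z.re ^ 6 * z.im ^ 0) / ((z.re ^ 2 + z.im ^ 2) ^ 2 + 1) ^ 3
set_option maxHeartbeats 1000000 in
lemma Hf1 (z : ℂ) : ∃ L : ℂ →L[ℝ] ℝ, HasFDerivAt f1 L z ∧ L 1 = f1x z ∧ L Complex.I = f1y z := by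
  have hx : HasFDerivAt (fun z : ℂ => z.re) Complex.reCLM z := Complex.reCLM.hasFDerivAt
  have hy : HasFDerivAt (fun z : ℂ => z.im) Complex.imCLM z := Complex.imCLM.hasFDerivAt
  have hxp : ∀ n : ℕ, HasFDerivAt (fun z : ℂ => z.re ^ n) (((n : ℝ) * z.re ^ (n - 1)) • (Complex.reCLM : ℂ →L[ℝ] ℝ)) z :=
    fun n => (hasDerivAt_pow n z.re).comp_hasFDerivAt z hx
  have hyp : ∀ n : ℕ, HasFDerivAt (fun z : ℂ => z.im ^ n) (((n : ℝ) * z.im ^ (n - 1)) • (Complex.imCLM : ℂ →L[ℝ] ℝ)) z :=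
    fun n => (hasDerivAt_pow n z.im).comp_hasFDerivAt z hy
  have hpos : (0 : ℝ) < ((z.re ^ 2 + z.im ^ 2) ^ 2 + 1) := by positivity
  have hnum := ((((hxp 0).mul (hyp 2)).const_mul (-2 : ℝ)).add (((hxp 2).mul (hyp 0)).const_mul (2 : ℝ)))
  have hD := ((hasDerivAt_pow 2 (z.re ^ 2 + z.im ^ 2)).comp_hasFDerivAt z ((hxp 2).add (hyp 2))).add_const (1 : ℝ)
  have hden := hD
  have hinv := (hasDerivAt_inv hpos.ne').comp_hasFDerivAt z hden
  have h := hnum.mul hinv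
  refine ⟨_, h.congr_of_eventuallyEq (Filter.Eventually.of_forall fun w => by
      simp only [f1, Function.comp, div_eq_mul_inv, Pi.mul_apply, Pi.add_apply]; ring), ?_, ?_⟩ <;>
  · simp [f1x, f1y, ContinuousLinearMap.add_apply, ContinuousLinearMap.smul_apply]
    field_simp
    ring

set_option maxHeartbeats 1000000 in
lemma Hf2 (z : ℂ) : ∃ L : ℂ →L[ℝ] ℝ, HasFDerivAt f2 L z ∧ L 1 = f2x z ∧ L Complex.I = f2y z := by
  have hx : HasFDerivAt (fun z : ℂ => z.re) Complex.reCLM z := Complex.reCLM.hasFDerivAt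
  have hy : HasFDerivAt (fun z : ℂ => z.im) Complex.imCLM z := Complex.imCLM.hasFDerivAt
  have hxp : ∀ n : ℕ, HasFDerivAt (fun z : ℂ => z.re ^ n) (((n : ℝ) * z.re ^ (n - 1)) • (Complex.reCLM : ℂ →L[ℝ] ℝ)) z :=
    fun n => (hasDerivAt_pow n z.re).comp_hasFDerivAt z hx
  have hyp : ∀ n : ℕ, HasFDerivAt (fun z : ℂ => z.im ^ n) (((n : ℝ) * z.im ^ (n - 1)) • (Complex.imCLM : ℂ →L[ℝ] ℝ)) z :=
    fun n => (hasDerivAt_pow n z.im).comp_hasFDerivAt z hy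
  have hpos : (0 : ℝ) < ((z.re ^ 2 + z.im ^ 2) ^ 2 + 1) := by positivity
  have hnum := (((hxp 1).mul (hyp 1)).const_mul (4 : ℝ))
  have hD := ((hasDerivAt_pow 2 (z.re ^ 2 + z.im ^ 2)).comp_hasFDerivAt z ((hxp 2).add (hyp 2))).add_const (1 : ℝ)
  have hden := hD
  have hinv := (hasDerivAt_inv hpos.ne').comp_hasFDerivAt z hden
  have h := hnum.mul hinv
  refine ⟨_, h.congr_of_eventuallyEq (Filter.Eventually.of_forall fun w => by
      simp only [f2, Function.comp, div_eq_mul_inv, Pi.mul_apply, Pi.add_apply]; ring), ?_, ?_⟩ <;>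
  · simp [f2x, f2y, ContinuousLinearMap.add_apply, ContinuousLinearMap.smul_apply]
    field_simp
    ring

set_option maxHeartbeats 1000000 in
lemma Hf3 (z : ℂ) : ∃ L : ℂ →L[ℝ] ℝ, HasFDerivAt f3 L z ∧ L 1 = f3x z ∧ L Complex.I = f3y z := by
  have hx : HasFDerivAt (fun z : ℂ => z.re) Complex.reCLM z := Complex.reCLM.hasFDerivAt
  have hy : HasFDerivAt (fun z : ℂ => z.im) Complex.imCLM z := Complex.imCLM.hasFDerivAt
  have hxp : ∀ n : ℕ, HasFDerivAt (fun z : ℂ => z.re ^ n) (((n : ℝ) * z.re ^ (n - 1)) • (Complex.reCLM : ℂ →L[ℝ] ℝ)) z :=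
    fun n => (hasDerivAt_pow n z.re).comp_hasFDerivAt z hx
  have hyp : ∀ n : ℕ, HasFDerivAt (fun z : ℂ => z.im ^ n) (((n : ℝ) * z.im ^ (n - 1)) • (Complex.imCLM : ℂ →L[ℝ] ℝ)) z :=
    fun n => (hasDerivAt_pow n z.im).comp_hasFDerivAt z hy
  have hpos : (0 : ℝ) < ((z.re ^ 2 + z.im ^ 2) ^ 2 + 1) := by positivity
  have hnum := ((((((hxp 0).mul (hyp 0)).const_mul (-1 : ℝ)).add (((hxp 0).mul (hyp 4)).const_mul (1 : ℝ))).add (((hxp 2).mul (hyp 2)).const_mul (2 : ℝ))).add (((hxp 4).mul (hyp 0)).const_mul (1 : ℝ)))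
  have hD := ((hasDerivAt_pow 2 (z.re ^ 2 + z.im ^ 2)).comp_hasFDerivAt z ((hxp 2).add (hyp 2))).add_const (1 : ℝ)
  have hden := hD
  have hinv := (hasDerivAt_inv hpos.ne').comp_hasFDerivAt z hden
  have h := hnum.mul hinv
  refine ⟨_, h.congr_of_eventuallyEq (Filter.Eventually.of_forall fun w => by
      simp only [f3, Function.comp, div_eq_mul_inv, Pi.mul_apply, Pi.add_apply]; ring), ?_, ?_⟩ <;>
  · simp [f3x, f3y, ContinuousLinearMap.add_apply, ContinuousLinearMap.smul_apply]
    field_simp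
    ring

set_option maxHeartbeats 1000000 in
lemma Hf1x (z : ℂ) : ∃ L : ℂ →L[ℝ] ℝ, HasFDerivAt f1x L z ∧ L 1 = f1xx z ∧ L Complex.I = f1xy z := by
  have hx : HasFDerivAt (fun z : ℂ => z.re) Complex.reCLM z := Complex.reCLM.hasFDerivAt
  have hy : HasFDerivAt (fun z : ℂ => z.im) Complex.imCLM z := Complex.imCLM.hasFDerivAt
  have hxp : ∀ n : ℕ, HasFDerivAt (fun z : ℂ => z.re ^ n) (((n : ℝ) * z.re ^ (n - 1)) • (Complex.reCLM : ℂ →L[ℝ] ℝ)) z :=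
    fun n => (hasDerivAt_pow n z.re).comp_hasFDerivAt z hx
  have hyp : ∀ n : ℕ, HasFDerivAt (fun z : ℂ => z.im ^ n) (((n : ℝ) * z.im ^ (n - 1)) • (Complex.imCLM : ℂ →L[ℝ] ℝ)) z :=
    fun n => (hasDerivAt_pow n z.im).comp_hasFDerivAt z hy
  have hpos : (0 : ℝ) < ((z.re ^ 2 + z.im ^ 2) ^ 2 + 1) ^ 2 := by positivity
  have hnum := ((((((hxp 1).mul (hyp 0)).const_mul (4 : ℝ)).add (((hxp 1).mul (hyp 4)).const_mul (12 : ℝ))).add (((hxp 3).mul (hyp 2)).const_mul (8 : ℝ))).add (((hxp 5).mul (hyp 0)).const_mul (-4 : ℝ)))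
  have hD := ((hasDerivAt_pow 2 (z.re ^ 2 + z.im ^ 2)).comp_hasFDerivAt z ((hxp 2).add (hyp 2))).add_const (1 : ℝ)
  have hden := (hasDerivAt_pow 2 ((z.re ^ 2 + z.im ^ 2) ^ 2 + 1)).comp_hasFDerivAt z hD
  have hinv := (hasDerivAt_inv hpos.ne').comp_hasFDerivAt z hden
  have h := hnum.mul hinv
  refine ⟨_, h.congr_of_eventuallyEq (Filter.Eventually.of_forall fun w => by
      simp only [f1x, Function.comp, div_eq_mul_inv, Pi.mul_apply, Pi.add_apply]; ring), ?_, ?_⟩ <;>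
  · simp [f1xx, f1xy, ContinuousLinearMap.add_apply, ContinuousLinearMap.smul_apply]
    field_simp
    ring

set_option maxHeartbeats 1000000 in
lemma Hf1y (z : ℂ) : ∃ L : ℂ →L[ℝ] ℝ, HasFDerivAt f1y L z ∧ L 1 = f1yx z ∧ L Complex.I = f1yy z := by
  have hx : HasFDerivAt (fun z : ℂ => z.re) Complex.reCLM z := Complex.reCLM.hasFDerivAt
  have hy : HasFDerivAt (fun z : ℂ => z.im) Complex.imCLM z := Complex.imCLM.hasFDerivAt
  have hxp : ∀ n : ℕ, HasFDerivAt (fun z : ℂ => z.re ^ n) (((n : ℝ) * z.re ^ (n - 1)) • (Complex.reCLM : ℂ →L[ℝ] ℝ)) z :=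
    fun n => (hasDerivAt_pow n z.re).comp_hasFDerivAt z hx
  have hyp : ∀ n : ℕ, HasFDerivAt (fun z : ℂ => z.im ^ n) (((n : ℝ) * z.im ^ (n - 1)) • (Complex.imCLM : ℂ →L[ℝ] ℝ)) z :=
    fun n => (hasDerivAt_pow n z.im).comp_hasFDerivAt z hy
  have hpos : (0 : ℝ) < ((z.re ^ 2 + z.im ^ 2) ^ 2 + 1) ^ 2 := by positivity
  have hnum := ((((((hxp 0).mul (hyp 1)).const_mul (-4 : ℝ)).add (((hxp 0).mul (hyp 5)).const_mul (4 : ℝ))).add (((hxp 2).mul (hyp 3)).const_mul (-8 : ℝ))).add (((hxp 4).mul (hyp 1)).const_mul (-12 : ℝ)))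
  have hD := ((hasDerivAt_pow 2 (z.re ^ 2 + z.im ^ 2)).comp_hasFDerivAt z ((hxp 2).add (hyp 2))).add_const (1 : ℝ)
  have hden := (hasDerivAt_pow 2 ((z.re ^ 2 + z.im ^ 2) ^ 2 + 1)).comp_hasFDerivAt z hD
  have hinv := (hasDerivAt_inv hpos.ne').comp_hasFDerivAt z hden
  have h := hnum.mul hinv
  refine ⟨_, h.congr_of_eventuallyEq (Filter.Eventually.of_forall fun w => by
      simp only [f1y, Function.comp, div_eq_mul_inv, Pi.mul_apply, Pi.add_apply]; ring), ?_, ?_⟩ <;>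
  · simp [f1yx, f1yy, ContinuousLinearMap.add_apply, ContinuousLinearMap.smul_apply]
    field_simp
    ring

set_option maxHeartbeats 1000000 in
lemma Hf2x (z : ℂ) : ∃ L : ℂ →L[ℝ] ℝ, HasFDerivAt f2x L z ∧ L 1 = f2xx z ∧ L Complex.I = f2xy z := by
  have hx : HasFDerivAt (fun z : ℂ => z.re) Complex.reCLM z := Complex.reCLM.hasFDerivAt
  have hy : HasFDerivAt (fun z : ℂ => z.im) Complex.imCLM z := Complex.imCLM.hasFDerivAt
  have hxp : ∀ n : ℕ, HasFDerivAt (fun z : ℂ => z.re ^ n) (((n : ℝ) * z.re ^ (n - 1)) • (Complex.reCLM : ℂ →L[ℝ] ℝ)) z :=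
    fun n => (hasDerivAt_pow n z.re).comp_hasFDerivAt z hx
  have hyp : ∀ n : ℕ, HasFDerivAt (fun z : ℂ => z.im ^ n) (((n : ℝ) * z.im ^ (n - 1)) • (Complex.imCLM : ℂ →L[ℝ] ℝ)) z :=
    fun n => (hasDerivAt_pow n z.im).comp_hasFDerivAt z hy
  have hpos : (0 : ℝ) < ((z.re ^ 2 + z.im ^ 2) ^ 2 + 1) ^ 2 := by positivity
  have hnum := ((((((hxp 0).mul (hyp 1)).const_mul (4 : ℝ)).add (((hxp 0).mul (hyp 5)).const_mul (4 : ℝ))).add (((hxp 2).mul (hyp 3)).const_mul (-8 : ℝ))).add (((hxp 4).mul (hyp 1)).const_mul (-12 : ℝ)))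
  have hD := ((hasDerivAt_pow 2 (z.re ^ 2 + z.im ^ 2)).comp_hasFDerivAt z ((hxp 2).add (hyp 2))).add_const (1 : ℝ)
  have hden := (hasDerivAt_pow 2 ((z.re ^ 2 + z.im ^ 2) ^ 2 + 1)).comp_hasFDerivAt z hD
  have hinv := (hasDerivAt_inv hpos.ne').comp_hasFDerivAt z hden
  have h := hnum.mul hinv
  refine ⟨_, h.congr_of_eventuallyEq (Filter.Eventually.of_forall fun w => by
      simp only [f2x, Function.comp, div_eq_mul_inv, Pi.mul_apply, Pi.add_apply]; ring), ?_, ?_⟩ <;>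
  · simp [f2xx, f2xy, ContinuousLinearMap.add_apply, ContinuousLinearMap.smul_apply]
    field_simp
    ring

set_option maxHeartbeats 1000000 in
lemma Hf2y (z : ℂ) : ∃ L : ℂ →L[ℝ] ℝ, HasFDerivAt f2y L z ∧ L 1 = f2yx z ∧ L Complex.I = f2yy z := by
  have hx : HasFDerivAt (fun z : ℂ => z.re) Complex.reCLM z := Complex.reCLM.hasFDerivAt
  have hy : HasFDerivAt (fun z : ℂ => z.im) Complex.imCLM z := Complex.imCLM.hasFDerivAt
  have hxp : ∀ n : ℕ, HasFDerivAt (fun z : ℂ => z.re ^ n) (((n : ℝ) * z.re ^ (n - 1)) • (Complex.reCLM : ℂ →L[ℝ] ℝ)) z :=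
    fun n => (hasDerivAt_pow n z.re).comp_hasFDerivAt z hx
  have hyp : ∀ n : ℕ, HasFDerivAt (fun z : ℂ => z.im ^ n) (((n : ℝ) * z.im ^ (n - 1)) • (Complex.imCLM : ℂ →L[ℝ] ℝ)) z :=
    fun n => (hasDerivAt_pow n z.im).comp_hasFDerivAt z hy
  have hpos : (0 : ℝ) < ((z.re ^ 2 + z.im ^ 2) ^ 2 + 1) ^ 2 := by positivity
  have hnum := ((((((hxp 1).mul (hyp 0)).const_mul (4 : ℝ)).add (((hxp 1).mul (hyp 4)).const_mul (-12 : ℝ))).add (((hxp 3).mul (hyp 2)).const_mul (-8 : ℝ))).add (((hxp 5).mul (hyp 0)).const_mul (4 : ℝ)))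
  have hD := ((hasDerivAt_pow 2 (z.re ^ 2 + z.im ^ 2)).comp_hasFDerivAt z ((hxp 2).add (hyp 2))).add_const (1 : ℝ)
  have hden := (hasDerivAt_pow 2 ((z.re ^ 2 + z.im ^ 2) ^ 2 + 1)).comp_hasFDerivAt z hD
  have hinv := (hasDerivAt_inv hpos.ne').comp_hasFDerivAt z hden
  have h := hnum.mul hinv
  refine ⟨_, h.congr_of_eventuallyEq (Filter.Eventually.of_forall fun w => by
      simp only [f2y, Function.comp, div_eq_mul_inv, Pi.mul_apply, Pi.add_apply]; ring), ?_, ?_⟩ <;>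
  · simp [f2yx, f2yy, ContinuousLinearMap.add_apply, ContinuousLinearMap.smul_apply]
    field_simp
    ring

set_option maxHeartbeats 1000000 in
lemma Hf3x (z : ℂ) : ∃ L : ℂ →L[ℝ] ℝ, HasFDerivAt f3x L z ∧ L 1 = f3xx z ∧ L Complex.I = f3xy z := by
  have hx : HasFDerivAt (fun z : ℂ => z.re) Complex.reCLM z := Complex.reCLM.hasFDerivAt
  have hy : HasFDerivAt (fun z : ℂ => z.im) Complex.imCLM z := Complex.imCLM.hasFDerivAt
  have hxp : ∀ n : ℕ, HasFDerivAt (fun z : ℂ => z.re ^ n) (((n : ℝ) * z.re ^ (n - 1)) • (Complex.reCLM : ℂ →L[ℝ] ℝ)) z :=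
    fun n => (hasDerivAt_pow n z.re).comp_hasFDerivAt z hx
  have hyp : ∀ n : ℕ, HasFDerivAt (fun z : ℂ => z.im ^ n) (((n : ℝ) * z.im ^ (n - 1)) • (Complex.imCLM : ℂ →L[ℝ] ℝ)) z :=
    fun n => (hasDerivAt_pow n z.im).comp_hasFDerivAt z hy
  have hpos : (0 : ℝ) < ((z.re ^ 2 + z.im ^ 2) ^ 2 + 1) ^ 2 := by positivity
  have hnum := ((((hxp 1).mul (hyp 2)).const_mul (8 : ℝ)).add (((hxp 3).mul (hyp 0)).const_mul (8 : ℝ)))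
  have hD := ((hasDerivAt_pow 2 (z.re ^ 2 + z.im ^ 2)).comp_hasFDerivAt z ((hxp 2).add (hyp 2))).add_const (1 : ℝ)
  have hden := (hasDerivAt_pow 2 ((z.re ^ 2 + z.im ^ 2) ^ 2 + 1)).comp_hasFDerivAt z hD
  have hinv := (hasDerivAt_inv hpos.ne').comp_hasFDerivAt z hden
  have h := hnum.mul hinv
  refine ⟨_, h.congr_of_eventuallyEq (Filter.Eventually.of_forall fun w => by
      simp only [f3x, Function.comp, div_eq_mul_inv, Pi.mul_apply, Pi.add_apply]; ring), ?_, ?_⟩ <;>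
  · simp [f3xx, f3xy, ContinuousLinearMap.add_apply, ContinuousLinearMap.smul_apply]
    field_simp
    ring

set_option maxHeartbeats 1000000 in
lemma Hf3y (z : ℂ) : ∃ L : ℂ →L[ℝ] ℝ, HasFDerivAt f3y L z ∧ L 1 = f3yx z ∧ L Complex.I = f3yy z := by
  have hx : HasFDerivAt (fun z : ℂ => z.re) Complex.reCLM z := Complex.reCLM.hasFDerivAt
  have hy : HasFDerivAt (fun z : ℂ => z.im) Complex.imCLM z := Complex.imCLM.hasFDerivAt
  have hxp : ∀ n : ℕ, HasFDerivAt (fun z : ℂ => z.re ^ n) (((n : ℝ) * z.re ^ (n - 1)) • (Complex.reCLM : ℂ →L[ℝ] ℝ)) z :=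
    fun n => (hasDerivAt_pow n z.re).comp_hasFDerivAt z hx
  have hyp : ∀ n : ℕ, HasFDerivAt (fun z : ℂ => z.im ^ n) (((n : ℝ) * z.im ^ (n - 1)) • (Complex.imCLM : ℂ →L[ℝ] ℝ)) z :=
    fun n => (hasDerivAt_pow n z.im).comp_hasFDerivAt z hy
  have hpos : (0 : ℝ) < ((z.re ^ 2 + z.im ^ 2) ^ 2 + 1) ^ 2 := by positivity
  have hnum := ((((hxp 0).mul (hyp 3)).const_mul (8 : ℝ)).add (((hxp 2).mul (hyp 1)).const_mul (8 : ℝ)))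
  have hD := ((hasDerivAt_pow 2 (z.re ^ 2 + z.im ^ 2)).comp_hasFDerivAt z ((hxp 2).add (hyp 2))).add_const (1 : ℝ)
  have hden := (hasDerivAt_pow 2 ((z.re ^ 2 + z.im ^ 2) ^ 2 + 1)).comp_hasFDerivAt z hD
  have hinv := (hasDerivAt_inv hpos.ne').comp_hasFDerivAt z hden
  have h := hnum.mul hinv
  refine ⟨_, h.congr_of_eventuallyEq (Filter.Eventually.of_forall fun w => by
      simp only [f3y, Function.comp, div_eq_mul_inv, Pi.mul_apply, Pi.add_apply]; ring), ?_, ?_⟩ <;>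
  · simp [f3yx, f3yy, ContinuousLinearMap.add_apply, ContinuousLinearMap.smul_apply]
    field_simp
    ring


lemma e3_eq (a b c : ℝ) : e3 a b c = a • e3 1 0 0 + b • e3 0 1 0 + c • e3 0 0 1 := by
  ext i; fin_cases i <;> simp [e3, WithLp.equiv_symm_apply, PiLp.toLp_apply]

lemma fderiv_e3fun {f g h a₁ a₂ a₃ b₁ b₂ b₃ : ℂ → ℝ}
    (H1 : ∀ z, ∃ L : ℂ →L[ℝ] ℝ, HasFDerivAt f L z ∧ L 1 = a₁ z ∧ L Complex.I = b₁ z)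
    (H2 : ∀ z, ∃ L : ℂ →L[ℝ] ℝ, HasFDerivAt g L z ∧ L 1 = a₂ z ∧ L Complex.I = b₂ z)
    (H3 : ∀ z, ∃ L : ℂ →L[ℝ] ℝ, HasFDerivAt h L z ∧ L 1 = a₃ z ∧ L Complex.I = b₃ z) :
    pdx (fun z => e3 (f z) (g z) (h z)) = (fun z => e3 (a₁ z) (a₂ z) (a₃ z)) ∧
    pdy (fun z => e3 (f z) (g z) (h z)) = (fun z => e3 (b₁ z) (b₂ z) (b₃ z)) := by
  have key : ∀ z, HasFDerivAt (fun w => e3 (f w) (g w) (h w))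
      ((Classical.choose (H1 z)).smulRight (e3 1 0 0) + (Classical.choose (H2 z)).smulRight (e3 0 1 0)
        + (Classical.choose (H3 z)).smulRight (e3 0 0 1)) z := by
    intro z
    have hrw : (fun w => e3 (f w) (g w) (h w))
        = fun w => f w • e3 1 0 0 + g w • e3 0 1 0 + h w • e3 0 0 1 := by
      funext w; rw [e3_eq]
    rw [hrw]
    exact (((Classical.choose_spec (H1 z)).1.smul_const _).add
      ((Classical.choose_spec (H2 z)).1.smul_const _)).add
      ((Classical.choose_spec (H3 z)).1.smul_const _)
  constructor <;> funext z
  · rw [pdx, (key z).fderiv]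
    simp only [ContinuousLinearMap.add_apply, ContinuousLinearMap.smulRight_apply,
      (Classical.choose_spec (H1 z)).2.1, (Classical.choose_spec (H2 z)).2.1,
      (Classical.choose_spec (H3 z)).2.1]
    ext i; fin_cases i <;> simp [e3, WithLp.equiv_symm_apply, PiLp.toLp_apply]
  · rw [pdy, (key z).fderiv]
    simp only [ContinuousLinearMap.add_apply, ContinuousLinearMap.smulRight_apply,
      (Classical.choose_spec (H1 z)).2.2, (Classical.choose_spec (H2 z)).2.2,
      (Classical.choose_spec (H3 z)).2.2]
    ext i; fin_cases i <;> simp [e3, WithLp.equiv_symm_apply, PiLp.toLp_apply]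

set_option maxHeartbeats 1000000 in
/-- The degree-2 H-bubble solves the H-system on all of `ℝ²`. -/
theorem W_solves_H_system : IsHSolution W Set.univ := by
  have hW : W = fun z => e3 (f1 z) (f2 z) (f3 z) := rfl
  obtain ⟨hx1, hy1⟩ := fderiv_e3fun Hf1 Hf2 Hf3
  obtain ⟨hx2, -⟩ := fderiv_e3fun Hf1x Hf2x Hf3x
  obtain ⟨-, hy2⟩ := fderiv_e3fun Hf1y Hf2y Hf3y
  constructor
  · rw [contDiffOn_univ]
    have hrw : W = fun z => f1 z • e3 1 0 0 + f2 z • e3 0 1 0 + f3 z • e3 0 0 1 := by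
      rw [hW]; funext z; rw [e3_eq]
    rw [hrw]
    have hre : ContDiff ℝ 2 (fun z : ℂ => z.re) := Complex.reCLM.contDiff
    have him : ContDiff ℝ 2 (fun z : ℂ => z.im) := Complex.imCLM.contDiff
    have c1 : ContDiff ℝ 2 f1 := by
      unfold f1; exact ContDiff.div (by fun_prop) (by fun_prop) (fun z => by positivity)
    have c2 : ContDiff ℝ 2 f2 := by
      unfold f2; exact ContDiff.div (by fun_prop) (by fun_prop) (fun z => by positivity)
    have c3 : ContDiff ℝ 2 f3 := by
      unfold f3; exact ContDiff.div (by fun_prop) (by fun_prop) (fun z => by positivity)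
    exact ((c1.smul contDiff_const).add (c2.smul contDiff_const)).add (c3.smul contDiff_const)
  · intro z _
    have hne : ((z.re ^ 2 + z.im ^ 2) ^ 2 + 1 : ℝ) ≠ 0 := by positivity
    show pdx (pdx W) z + pdy (pdy W) z = (2 : ℝ) • cross (pdx W z) (pdy W z)
    rw [hW, hx1, hy1, hx2, hy2]
    ext i
    fin_cases i <;>
    · simp [cross, e3, WithLp.equiv_symm_apply, PiLp.toLp_apply, f1x, f2x, f3x, f1y, f2y, f3y,
        f1xx, f2xx, f3xx, f1yy, f2yy, f3yy, smul_eq_mul]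
      field_simp
      ring
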